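/- Let X be a T1 topological space, let f : 𝕊 → X be a continuous open surjection from the Sorgenfrey line onto X, and let A be an at most countable subset of X. If for every x ∈ X \ A the fiber f⁻¹(x) contains a nontrivial convergent sequence (i.e., a sequence of points of f⁻¹(x), not eventually constant, converging in the Sorgenfrey line), then X is second countable, i.e., the weight of X is countable. -/
import Mathlib

open Set Filter Topology Function

/-- The Sorgenfrey line: the real line as a type synonym. -/
def SorgenfreyLine : Type := ℝ

notation "𝕊" => SorgenfreyLine

noncomputable instance : LinearOrder 𝕊 := inferInstanceAs (LinearOrder ℝ)
instance : RatCast 𝕊 := inferInstanceAs (RatCast ℝ)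

/-- The topology on the Sorgenfrey line, generated by half-open intervals `[a, b)`, `a < b`. -/
instance : TopologicalSpace 𝕊 :=
  TopologicalSpace.generateFrom {s : Set 𝕊 | ∃ a b : 𝕊, a < b ∧ s = Set.Ico a b}

namespace SorgenfreyAux

def ofR : ℝ → 𝕊 := id
def toR : 𝕊 → ℝ := id

lemma lt_iff {a b : 𝕊} : a < b ↔ toR a < toR b := Iff.rfl
lemma le_iff {a b : 𝕊} : a ≤ b ↔ toR a ≤ toR b := Iff.rfl
lemma ratCast_eq (q : ℚ) : (q : 𝕊) = ofR (q : ℝ) := rfl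

lemma isBasis : TopologicalSpace.IsTopologicalBasis
    {s : Set 𝕊 | ∃ a b : 𝕊, a < b ∧ s = Set.Ico a b} := by
  refine ⟨?_, ?_, rfl⟩
  · rintro t₁ ⟨a, b, hab, rfl⟩ t₂ ⟨c, d, hcd, rfl⟩ x ⟨⟨ha, hb⟩, hc, hd⟩
    refine ⟨Ico (max a c) (min b d), ⟨_, _, ?_, rfl⟩, ⟨?_, ?_⟩, ?_⟩
    · exact lt_of_le_of_lt (max_le ha hc) (lt_min hb hd)
    · exact max_le ha hc
    · exact lt_min hb hd
    · rw [← Ico_inter_Ico]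
  · apply eq_univ_of_forall
    intro x
    refine ⟨Ico x (ofR (toR x + 1)), ⟨x, _, ?_, rfl⟩, le_refl x, ?_⟩
    · exact lt_iff.2 (lt_add_one _)
    · exact lt_iff.2 (lt_add_one _)

lemma isOpen_Ico (a b : 𝕊) : IsOpen (Ico a b) := by
  rcases lt_or_ge a b with h | h
  · exact isBasis.isOpen ⟨a, b, h, rfl⟩
  · rw [Ico_eq_empty (not_lt.2 h)]; exact isOpen_empty

lemma mem_nhds {x : 𝕊} {s : Set 𝕊} : s ∈ 𝓝 x ↔ ∃ b, x < b ∧ Ico x b ⊆ s := by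
  rw [isBasis.mem_nhds_iff]
  constructor
  · rintro ⟨t, ⟨a, b, hab, rfl⟩, ⟨ha, hb⟩, hts⟩
    exact ⟨b, hb, fun z hz => hts ⟨le_trans ha hz.1, hz.2⟩⟩
  · rintro ⟨b, hb, hs⟩
    exact ⟨Ico x b, ⟨x, b, hb, rfl⟩, ⟨le_refl x, hb⟩, hs⟩

lemma exists_rat_btwn' {a b : 𝕊} (h : a < b) : ∃ q : ℚ, a < (q : 𝕊) ∧ (q : 𝕊) < b := by
  obtain ⟨q, hq1, hq2⟩ := exists_rat_btwn (lt_iff.1 h)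
  exact ⟨q, hq1, hq2⟩

end SorgenfreyAux

open SorgenfreyAux in
/-- If `f : 𝕊 → X` is a continuous open surjection onto a T1 space, `A ⊆ X` is at most
countable, and for every `x ∉ A` the fiber `f ⁻¹' {x}` contains a nontrivial (not eventually
constant) sequence converging in the Sorgenfrey line, then `X` is second countable. -/
theorem stmt0 {X : Type} [TopologicalSpace X] [T1Space X] (f : 𝕊 → X)
    (hf : Continuous f) (hopen : IsOpenMap f) (hsurj : Surjective f)
    (A : Set X) (hA : A.Countable)
    (hfib : ∀ x ∈ Set.univ \ A, ∃ u : ℕ → 𝕊, (∀ n, u n ∈ f ⁻¹' {x}) ∧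
      (¬ ∃ c : 𝕊, ∀ᶠ n in atTop, u n = c) ∧ ∃ y : 𝕊, Tendsto u atTop (𝓝 y)) :
    SecondCountableTopology X := by
  classical
  obtain ⟨g, hg⟩ := hsurj.hasRightInverse
  -- countable set of left endpoints
  set C : Set 𝕊 := Set.range ((↑) : ℚ → 𝕊) ∪ g '' A with hC
  have hCc : C.Countable := (Set.countable_range _).union (hA.image g)
  set B : Set (Set X) :=
    (fun p : 𝕊 × ℚ => f '' Ico p.1 ((p.2 : 𝕊))) '' (C ×ˢ (Set.univ : Set ℚ)) with hB
  have hBc : B.Countable := ((hCc.prod countable_univ).image _)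
  have hBopen : ∀ s ∈ B, IsOpen s := by
    rintro s ⟨⟨a, q⟩, -, rfl⟩
    exact hopen _ (isOpen_Ico _ _)
  have hBnhds : ∀ x U, x ∈ U → IsOpen U → ∃ v ∈ B, x ∈ v ∧ v ⊆ U := by
    intro x U hxU hU
    by_cases hxA : x ∈ A
    · -- use the section point g x
      have h1 : f ⁻¹' U ∈ 𝓝 (g x) := by
        refine hf.continuousAt.preimage_mem_nhds ?_
        rw [hg x]; exact hU.mem_nhds hxU
      obtain ⟨b, hb, hsub⟩ := mem_nhds.1 h1
      obtain ⟨q, hq1, hq2⟩ := exists_rat_btwn' hb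
      refine ⟨f '' Ico (g x) q, ⟨⟨g x, q⟩, ⟨Or.inr ⟨x, hxA, rfl⟩, trivial⟩, rfl⟩, ?_, ?_⟩
      · exact ⟨g x, ⟨le_refl _, hq1⟩, hg x⟩
      · rintro - ⟨z, hz, rfl⟩
        exact hsub ⟨hz.1, lt_trans hz.2 hq2⟩
    · obtain ⟨u, hu, hne, y, hy⟩ := hfib x ⟨trivial, hxA⟩
      have hfy : f y = x := by
        have h1 : Tendsto (f ∘ u) atTop (𝓝 (f y)) := (hf.tendsto y).comp hy
        have h2 : (f ∘ u) = fun _ => x := funext fun n => hu n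
        rw [h2] at h1
        exact (tendsto_const_nhds_iff.1 h1).symm
      have h1 : f ⁻¹' U ∈ 𝓝 y := by
        refine hf.continuousAt.preimage_mem_nhds ?_
        rw [hfy]; exact hU.mem_nhds hxU
      obtain ⟨b, hb, hsub⟩ := mem_nhds.1 h1
      -- find a fiber point strictly between y and b
      have hev : ∀ᶠ n in atTop, u n ∈ Ico y b := hy (mem_nhds.2 ⟨b, hb, subset_rfl⟩)
      have hfreq : ∃ᶠ n in atTop, u n ≠ y := by
        rw [Filter.not_eventually.symm]
        exact fun h => hne ⟨y, h⟩
      obtain ⟨n, hn1, hn2⟩ := (hfreq.and_eventually hev).exists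
      set z := u n with hz
      have hyz : y < z := lt_of_le_of_ne hn2.1 (Ne.symm hn1)
      have hzb : z < b := hn2.2
      obtain ⟨q, hq1, hq2⟩ := exists_rat_btwn' hyz
      obtain ⟨q', hq'1, hq'2⟩ := exists_rat_btwn' hzb
      refine ⟨f '' Ico (q : 𝕊) q', ⟨⟨(q : 𝕊), q'⟩, ⟨Or.inl ⟨q, rfl⟩, trivial⟩, rfl⟩, ?_, ?_⟩
      · exact ⟨z, ⟨le_of_lt hq2, hq'1⟩, hu n⟩
      · rintro - ⟨w, hw, rfl⟩
        exact hsub ⟨le_trans (le_of_lt hq1) hw.1, lt_trans hw.2 hq'2⟩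
  exact (TopologicalSpace.isTopologicalBasis_of_isOpen_of_nhds hBopen hBnhds).secondCountableTopology hBc
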